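/- Consider the coevolutionary model in which agents update their actions and opinions by the best-response update rule, and suppose Assumption 1 holds. If agent i is active at time t and x_i(t+1) ≠ x_i(t), then Φ(z(t+1)) - Φ(z(t)) > min_{k∈V} ξ λ (1-β) a_{kk} > 0, where ξ = 1/(β(1-λ)(1-γ)). -/

import Mathlib

open Finset

/-- The payoff of agent `i` for strategy `ζ = (ζ_a, ζ_o)` given the state `(x, y)`. -/
noncomputable def payoff {n : ℕ} (A W : Fin n → Fin n → ℝ) (α lam β γ : ℝ)
    (u x y : Fin n → ℝ) (i : Fin n) (ζ : ℝ × ℝ) : ℝ :=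
  lam * (1 - β) / 4 *
      ∑ j, A i j * ((1 - x j) * (1 - ζ.1) + (1 + α) * (1 + x j) * (1 + ζ.1))
    - 1 / 2 * β * (1 - lam) * (1 - γ) * ∑ j, W i j * (ζ.2 - y j) ^ 2
    - 1 / 2 * β * (1 - lam) * γ * (ζ.2 - u i) ^ 2
    - 1 / 2 * lam * β * (ζ.1 - ζ.2) ^ 2

/-- The potential function `Φ` of the coevolutionary game, with
`η = λ(1-β)/(4β(1-λ)(1-γ))`. -/
noncomputable def coevPhi {n : ℕ} (A W : Fin n → Fin n → ℝ) (α lam β γ : ℝ)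
    (u x y : Fin n → ℝ) : ℝ :=
  (∑ i, ∑ j ∈ Finset.univ.erase i,
      lam * (1 - β) / (4 * β * (1 - lam) * (1 - γ)) * (A i j / 2) *
        ((1 + α) * (1 + x j) * (1 + x i) + (1 - x i) * (1 - x j)))
    - 1 / 2 * ∑ i, ∑ j, W i j / 2 * (y i - y j) ^ 2
    - 1 / 2 * ∑ k, γ / (1 - γ) * (y k - u k) ^ 2
    - 1 / 2 * ∑ k, lam / ((1 - lam) * (1 - γ)) * (y k - x k) ^ 2

/-- The quantity `δ_i(z)`. -/
noncomputable def deltaFn {n : ℕ} (A W : Fin n → Fin n → ℝ) (α lam β γ : ℝ)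
    (u x y : Fin n → ℝ) (i : Fin n) : ℝ :=
  2 * lam * β * (1 - lam) * ((1 - γ) * ∑ j, W i j * y j + γ * u i)
    + (1 - β) * lam / 2 * ∑ j, A i j * (2 * x j + α * (1 + x j))

/-- `S(d; x_i)`: `+1` if `d > 0`, `-1` if `d < 0`, and `x_i` if `d = 0`. -/
noncomputable def brSign (d xi : ℝ) : ℝ := if 0 < d then 1 else if d < 0 then -1 else xi

lemma sum_cross_erase {n : ℕ} (d : Fin n → Fin n → ℝ) (i : Fin n)
    (h0 : ∀ k j, k ≠ i → j ≠ i → d k j = 0) :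
    ∑ k, ∑ j ∈ Finset.univ.erase k, d k j
      = ∑ j ∈ Finset.univ.erase i, (d i j + d j i) := by
  rw [← Finset.add_sum_erase _ (fun k => ∑ j ∈ Finset.univ.erase k, d k j) (Finset.mem_univ i),
    Finset.sum_add_distrib]
  congr 1
  apply Finset.sum_congr rfl
  intro k hk
  have hki : k ≠ i := Finset.ne_of_mem_erase hk
  rw [← Finset.add_sum_erase _ (fun j => d k j)
    (Finset.mem_erase.mpr ⟨Ne.symm hki, Finset.mem_univ i⟩)]
  have hz : ∑ j ∈ (Finset.univ.erase k).erase i, d k j = 0 :=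
    Finset.sum_eq_zero fun j hj => h0 k j hki (Finset.ne_of_mem_erase hj)
  rw [hz, add_zero]

lemma sum_cross_full {n : ℕ} (d : Fin n → Fin n → ℝ) (i : Fin n)
    (h0 : ∀ k j, k ≠ i → j ≠ i → d k j = 0) (hii : d i i = 0) :
    ∑ k, ∑ j, d k j = ∑ j ∈ Finset.univ.erase i, (d i j + d j i) := by
  rw [← Finset.add_sum_erase _ (fun k => ∑ j, d k j) (Finset.mem_univ i),
    Finset.sum_add_distrib]
  congr 1
  · rw [← Finset.add_sum_erase _ (fun j => d i j) (Finset.mem_univ i), hii, zero_add]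
  · apply Finset.sum_congr rfl
    intro k hk
    have hki : k ≠ i := Finset.ne_of_mem_erase hk
    rw [← Finset.add_sum_erase _ (fun j => d k j) (Finset.mem_univ i)]
    have hz : ∑ j ∈ Finset.univ.erase i, d k j = 0 :=
      Finset.sum_eq_zero fun j hj => h0 k j hki (Finset.ne_of_mem_erase hj)
    rw [hz, add_zero]

lemma sum_single_diff {n : ℕ} (f : Fin n → ℝ) (i : Fin n)
    (h0 : ∀ k, k ≠ i → f k = 0) : ∑ k, f k = f i :=
  Finset.sum_eq_single_of_mem i (Finset.mem_univ i) (fun k _ hk => h0 k hk)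

lemma phi_diff {n : ℕ} (A W : Fin n → Fin n → ℝ) (α lam β γ : ℝ)
    (u x y x' y' : Fin n → ℝ) (i : Fin n)
    (hAs : ∀ j k, A j k = A k j) (hWs : ∀ j k, W j k = W k j)
    (hx : ∀ j, j ≠ i → x' j = x j) (hy : ∀ j, j ≠ i → y' j = y j) :
    coevPhi A W α lam β γ u x' y' - coevPhi A W α lam β γ u x y =
      (∑ j ∈ Finset.univ.erase i,
          lam * (1 - β) / (4 * β * (1 - lam) * (1 - γ)) * A i j *
            ((1 + α) * (1 + x j) * (1 + x' i) + (1 - x' i) * (1 - x j)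
              - ((1 + α) * (1 + x j) * (1 + x i) + (1 - x i) * (1 - x j))))
      - 1 / 2 * ∑ j ∈ Finset.univ.erase i,
          W i j * ((y' i - y j) ^ 2 - (y i - y j) ^ 2)
      - 1 / 2 * (γ / (1 - γ)) * ((y' i - u i) ^ 2 - (y i - u i) ^ 2)
      - 1 / 2 * (lam / ((1 - lam) * (1 - γ))) * ((y' i - x' i) ^ 2 - (y i - x i) ^ 2) := by
  have h1 :
      (∑ k, ∑ j ∈ Finset.univ.erase k,
          lam * (1 - β) / (4 * β * (1 - lam) * (1 - γ)) * (A k j / 2) *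
            ((1 + α) * (1 + x' j) * (1 + x' k) + (1 - x' k) * (1 - x' j)))
        - (∑ k, ∑ j ∈ Finset.univ.erase k,
          lam * (1 - β) / (4 * β * (1 - lam) * (1 - γ)) * (A k j / 2) *
            ((1 + α) * (1 + x j) * (1 + x k) + (1 - x k) * (1 - x j)))
      = ∑ j ∈ Finset.univ.erase i,
          lam * (1 - β) / (4 * β * (1 - lam) * (1 - γ)) * A i j *
            ((1 + α) * (1 + x j) * (1 + x' i) + (1 - x' i) * (1 - x j)
              - ((1 + α) * (1 + x j) * (1 + x i) + (1 - x i) * (1 - x j))) := by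
    rw [← Finset.sum_sub_distrib]
    have e1 : ∀ k : Fin n, (∑ j ∈ Finset.univ.erase k,
          lam * (1 - β) / (4 * β * (1 - lam) * (1 - γ)) * (A k j / 2) *
            ((1 + α) * (1 + x' j) * (1 + x' k) + (1 - x' k) * (1 - x' j)))
        - (∑ j ∈ Finset.univ.erase k,
          lam * (1 - β) / (4 * β * (1 - lam) * (1 - γ)) * (A k j / 2) *
            ((1 + α) * (1 + x j) * (1 + x k) + (1 - x k) * (1 - x j)))
        = ∑ j ∈ Finset.univ.erase k,
          (lam * (1 - β) / (4 * β * (1 - lam) * (1 - γ)) * (A k j / 2) *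
            ((1 + α) * (1 + x' j) * (1 + x' k) + (1 - x' k) * (1 - x' j))
          - lam * (1 - β) / (4 * β * (1 - lam) * (1 - γ)) * (A k j / 2) *
            ((1 + α) * (1 + x j) * (1 + x k) + (1 - x k) * (1 - x j))) := by
      intro k; rw [Finset.sum_sub_distrib]
    calc ∑ k, _ = ∑ j ∈ Finset.univ.erase i, _ := by
          rw [Finset.sum_congr rfl (fun k _ => e1 k)]
          exact sum_cross_erase _ i (fun k j hk hj => by rw [hx k hk, hx j hj]; ring)
      _ = _ := by
          apply Finset.sum_congr rfl
          intro j hj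
          have hji : j ≠ i := Finset.ne_of_mem_erase hj
          rw [hx j hji, hAs j i]
          ring
  have h2 :
      (∑ k, ∑ j, W k j / 2 * (y' k - y' j) ^ 2) - (∑ k, ∑ j, W k j / 2 * (y k - y j) ^ 2)
      = ∑ j ∈ Finset.univ.erase i, W i j * ((y' i - y j) ^ 2 - (y i - y j) ^ 2) := by
    rw [← Finset.sum_sub_distrib]
    have e1 : ∀ k : Fin n, (∑ j, W k j / 2 * (y' k - y' j) ^ 2)
        - (∑ j, W k j / 2 * (y k - y j) ^ 2)
        = ∑ j, (W k j / 2 * (y' k - y' j) ^ 2 - W k j / 2 * (y k - y j) ^ 2) := by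
      intro k; rw [Finset.sum_sub_distrib]
    calc ∑ k, _ = ∑ j ∈ Finset.univ.erase i, _ := by
          rw [Finset.sum_congr rfl (fun k _ => e1 k)]
          exact sum_cross_full _ i
            (fun k j hk hj => by rw [hy k hk, hy j hj]; ring) (by ring)
      _ = _ := by
          apply Finset.sum_congr rfl
          intro j hj
          have hji : j ≠ i := Finset.ne_of_mem_erase hj
          rw [hy j hji, hWs j i]
          ring
  have h3 :
      (∑ k, γ / (1 - γ) * (y' k - u k) ^ 2) - (∑ k, γ / (1 - γ) * (y k - u k) ^ 2)
      = γ / (1 - γ) * ((y' i - u i) ^ 2 - (y i - u i) ^ 2) := by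
    rw [← Finset.sum_sub_distrib]
    rw [sum_single_diff _ i (fun k hk => by rw [hy k hk]; ring)]
    ring
  have h4 :
      (∑ k, lam / ((1 - lam) * (1 - γ)) * (y' k - x' k) ^ 2)
        - (∑ k, lam / ((1 - lam) * (1 - γ)) * (y k - x k) ^ 2)
      = lam / ((1 - lam) * (1 - γ)) * ((y' i - x' i) ^ 2 - (y i - x i) ^ 2) := by
    rw [← Finset.sum_sub_distrib]
    rw [sum_single_diff _ i (fun k hk => by rw [hy k hk, hx k hk]; ring)]
    ring
  unfold coevPhi
  linarith [h1, h2, h3, h4]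

set_option maxHeartbeats 2000000 in
lemma key_ineq (lam β γ α c s y0 y1 SA SW Uu Aii Wii : ℝ)
    (hl : 0 < lam) (hl1 : lam < 1) (hb : 0 < β) (hb1 : β < 1)
    (hg : 0 < γ) (hg1 : γ < 1) (ha : 0 ≤ α) (hAii : 0 ≤ Aii) (hWii : 0 ≤ Wii)
    (hc2 : c ^ 2 = 1) (hc1 : -1 ≤ c) (hs : s = -c)
    (hy1 : y1 = (1 - lam) * ((1 - γ) * SW + γ * Uu) + lam * s)
    (hδ : c * (2 * lam * β * (1 - lam) * ((1 - γ) * SW + γ * Uu)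
      + (1 - β) * lam / 2 * SA) < 0) :
    lam * (1 - β) / (4 * β * (1 - lam) * (1 - γ)) * (s - c)
        * (SA - Aii * (2 * c + α * (1 + c)))
      - 1 / 2 * ((y1 ^ 2 - 2 * y1 * SW) - (y0 ^ 2 - 2 * y0 * SW))
      + 1 / 2 * Wii * (y1 - y0) ^ 2
      - 1 / 2 * (γ / (1 - γ)) * ((y1 - Uu) ^ 2 - (y0 - Uu) ^ 2)
      - 1 / 2 * (lam / ((1 - lam) * (1 - γ))) * ((y1 - s) ^ 2 - (y0 - c) ^ 2)
      > 1 / (β * (1 - lam) * (1 - γ)) * lam * (1 - β) * Aii := by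
  subst hs
  subst hy1
  have h1 : (0:ℝ) < 1 - lam := by linarith
  have h2 : (0:ℝ) < 1 - β := by linarith
  have h3 : (0:ℝ) < 1 - γ := by linarith
  have hD : (0:ℝ) < 4 * β * (1 - lam) * (1 - γ) := by positivity
  have t1 : (0:ℝ) ≤ 2 * β * (y0 - (1 - lam) * ((1 - γ) * SW + γ * Uu) - lam * c) ^ 2 :=
    mul_nonneg (by linarith) (sq_nonneg _)
  have t2 : (0:ℝ) ≤ 2 * β * (1 - lam) * (1 - γ) * Wii
      * (((1 - lam) * ((1 - γ) * SW + γ * Uu) + lam * (-c)) - y0) ^ 2 :=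
    mul_nonneg (mul_nonneg (mul_nonneg (mul_nonneg (by linarith) h1.le) h3.le) hWii)
      (sq_nonneg _)
  have t3 : (0:ℝ) ≤ 2 * lam * (1 - β) * Aii * (2 * (c ^ 2 - 1) + α * (c ^ 2 + c)) := by
    rw [hc2]
    have h4 : (0:ℝ) ≤ α * (1 + c) := mul_nonneg ha (by linarith)
    nlinarith [mul_nonneg (mul_nonneg (mul_nonneg (show (0:ℝ) ≤ 2 * lam by linarith) h2.le) hAii) h4]
  have hN : (0:ℝ) <
      -4 * (c * (2 * lam * β * (1 - lam) * ((1 - γ) * SW + γ * Uu)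
        + (1 - β) * lam / 2 * SA))
      + 2 * β * (y0 - (1 - lam) * ((1 - γ) * SW + γ * Uu) - lam * c) ^ 2
      + 2 * β * (1 - lam) * (1 - γ) * Wii
        * (((1 - lam) * ((1 - γ) * SW + γ * Uu) + lam * (-c)) - y0) ^ 2
      + 2 * lam * (1 - β) * Aii * (2 * (c ^ 2 - 1) + α * (c ^ 2 + c)) := by
    linarith
  rw [gt_iff_lt, ← sub_pos]
  have hβ0 : β ≠ 0 := ne_of_gt hb
  have hl0 : (1:ℝ) - lam ≠ 0 := ne_of_gt h1
  have hg0 : (1:ℝ) - γ ≠ 0 := ne_of_gt h3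
  refine lt_of_lt_of_eq (div_pos hN hD) ?_
  field_simp
  ring

set_option maxHeartbeats 2000000 in
theorem stmt7 {n : ℕ} (hn : 2 ≤ n) (A W : Fin n → Fin n → ℝ) (α lam β γ : ℝ)
    (u : Fin n → ℝ)
    (hA : ∀ j k, 0 ≤ A j k) (hW : ∀ j k, 0 ≤ W j k)
    (hArow : ∀ j, ∑ k, A j k = 1) (hWrow : ∀ j, ∑ k, W j k = 1)
    (hα : 0 ≤ α) (hlam : lam ∈ Set.Ioo (0 : ℝ) 1) (hβ : β ∈ Set.Ioo (0 : ℝ) 1)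
    (hγ : γ ∈ Set.Ioo (0 : ℝ) 1) (hu : ∀ j, u j ∈ Set.Icc (-1 : ℝ) 1)
    -- Assumption 1: symmetric layers and positive self-loops on the influence layer
    (hAsymm : ∀ j k, A j k = A k j) (hWsymm : ∀ j k, W j k = W k j)
    (hAdiag : ∀ j, 0 < A j j)
    -- the trajectory of the coevolutionary model: σ t is the agent active at time t
    (x y : ℕ → Fin n → ℝ) (σ : ℕ → Fin n)
    (h0x : ∀ j, x 0 j = -1 ∨ x 0 j = 1) (h0y : ∀ j, y 0 j ∈ Set.Icc (-1 : ℝ) 1)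
    (hupx : ∀ t, x (t + 1) (σ t) =
      brSign (deltaFn A W α lam β γ u (x t) (y t) (σ t)) (x t (σ t)))
    (hupy : ∀ t, y (t + 1) (σ t) =
      (1 - lam) * ((1 - γ) * (∑ j, W (σ t) j * y t j) + γ * u (σ t)) +
        lam * brSign (deltaFn A W α lam β γ u (x t) (y t) (σ t)) (x t (σ t)))
    (hkeep : ∀ t j, j ≠ σ t → x (t + 1) j = x t j ∧ y (t + 1) j = y t j)
    (t : ℕ) (hchange : x (t + 1) (σ t) ≠ x t (σ t)) :
    coevPhi A W α lam β γ u (x (t + 1)) (y (t + 1)) -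
        coevPhi A W α lam β γ u (x t) (y t) >
      Finset.univ.inf' ⟨⟨0, by omega⟩, Finset.mem_univ _⟩
        (fun k => (1 / (β * (1 - lam) * (1 - γ))) * lam * (1 - β) * A k k) ∧
    Finset.univ.inf' ⟨⟨0, by omega⟩, Finset.mem_univ _⟩
        (fun k => (1 / (β * (1 - lam) * (1 - γ))) * lam * (1 - β) * A k k) > 0 := by
  obtain ⟨hl, hl1⟩ := hlam
  obtain ⟨hb, hb1⟩ := hβ
  obtain ⟨hg, hg1⟩ := hγ
  have h1l : (0:ℝ) < 1 - lam := by linarith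
  have h2l : (0:ℝ) < 1 - β := by linarith
  have h3l : (0:ℝ) < 1 - γ := by linarith
  -- actions stay in {±1}
  have hxpm : ∀ m, ∀ j, x m j = 1 ∨ x m j = -1 := by
    intro m
    induction m with
    | zero => intro j; exact (h0x j).symm
    | succ m ih =>
      intro j
      by_cases hj : j = σ m
      · subst hj
        rw [hupx m]
        unfold brSign
        split_ifs
        · left; rfl
        · right; rfl
        · exact ih _
      · rw [(hkeep m j hj).1]; exact ih j
  -- the flip and the sign of δ
  have key2 : x (t + 1) (σ t) = -(x t (σ t)) ∧
      x t (σ t) * deltaFn A W α lam β γ u (x t) (y t) (σ t) < 0 := by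
    have hbr := hupx t
    unfold brSign at hbr
    rcases lt_trichotomy (deltaFn A W α lam β γ u (x t) (y t) (σ t)) 0 with hd | hd | hd
    · rw [if_neg (by linarith), if_pos hd] at hbr
      have hc : x t (σ t) = 1 := by
        rcases hxpm t (σ t) with h | h
        · exact h
        · exact absurd (by rw [hbr, h]) hchange
      exact ⟨by rw [hbr, hc], by rw [hc]; linarith⟩
    · have e1 : ¬ (0:ℝ) < deltaFn A W α lam β γ u (x t) (y t) (σ t) := by
        rw [hd]; exact lt_irrefl 0
      have e2 : ¬ deltaFn A W α lam β γ u (x t) (y t) (σ t) < 0 := by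
        rw [hd]; exact lt_irrefl 0
      rw [if_neg e1, if_neg e2] at hbr
      exact absurd hbr hchange
    · rw [if_pos hd] at hbr
      have hc : x t (σ t) = -1 := by
        rcases hxpm t (σ t) with h | h
        · exact absurd (by rw [hbr, h]) hchange
        · exact h
      exact ⟨by rw [hbr, hc]; norm_num, by rw [hc]; linarith⟩
  have hc2 : (x t (σ t)) ^ 2 = 1 := by
    rcases hxpm t (σ t) with h | h <;> rw [h] <;> norm_num
  have hc1 : -1 ≤ x t (σ t) := by
    rcases hxpm t (σ t) with h | h <;> rw [h] <;> norm_num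
  have hy1 : y (t + 1) (σ t) = (1 - lam) *
      ((1 - γ) * (∑ j, W (σ t) j * y t j) + γ * u (σ t)) + lam * (x (t + 1) (σ t)) := by
    have h := hupy t
    rw [← hupx t] at h
    exact h
  have hδ' : x t (σ t) * (2 * lam * β * (1 - lam) *
      ((1 - γ) * (∑ j, W (σ t) j * y t j) + γ * u (σ t))
      + (1 - β) * lam / 2 * (∑ j, A (σ t) j * (2 * x t j + α * (1 + x t j)))) < 0 := by
    have h := key2.2
    unfold deltaFn at h
    exact h
  have hΦ := phi_diff A W α lam β γ u (x t) (y t) (x (t + 1)) (y (t + 1)) (σ t)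
    hAsymm hWsymm (fun j hj => (hkeep t j hj).1) (fun j hj => (hkeep t j hj).2)
  -- rewrite the first sum
  have hsum1 : (∑ j ∈ Finset.univ.erase (σ t),
        lam * (1 - β) / (4 * β * (1 - lam) * (1 - γ)) * A (σ t) j *
          ((1 + α) * (1 + x t j) * (1 + x (t + 1) (σ t))
            + (1 - x (t + 1) (σ t)) * (1 - x t j)
            - ((1 + α) * (1 + x t j) * (1 + x t (σ t))
              + (1 - x t (σ t)) * (1 - x t j))))
      = lam * (1 - β) / (4 * β * (1 - lam) * (1 - γ)) * (x (t + 1) (σ t) - x t (σ t))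
        * ((∑ j, A (σ t) j * (2 * x t j + α * (1 + x t j)))
          - A (σ t) (σ t) * (2 * x t (σ t) + α * (1 + x t (σ t)))) := by
    have hdecomp : A (σ t) (σ t) * (2 * x t (σ t) + α * (1 + x t (σ t)))
        + ∑ j ∈ Finset.univ.erase (σ t), A (σ t) j * (2 * x t j + α * (1 + x t j))
        = ∑ j, A (σ t) j * (2 * x t j + α * (1 + x t j)) :=
      Finset.add_sum_erase _ (fun j => A (σ t) j * (2 * x t j + α * (1 + x t j)))
        (Finset.mem_univ _)
    have he : ∑ j ∈ Finset.univ.erase (σ t), A (σ t) j * (2 * x t j + α * (1 + x t j))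
        = (∑ j, A (σ t) j * (2 * x t j + α * (1 + x t j)))
          - A (σ t) (σ t) * (2 * x t (σ t) + α * (1 + x t (σ t))) := by
      linarith [hdecomp]
    calc (∑ j ∈ Finset.univ.erase (σ t), _)
        = ∑ j ∈ Finset.univ.erase (σ t),
            (lam * (1 - β) / (4 * β * (1 - lam) * (1 - γ))
              * (x (t + 1) (σ t) - x t (σ t)))
            * (A (σ t) j * (2 * x t j + α * (1 + x t j))) :=
          Finset.sum_congr rfl (fun j _ => by ring)
      _ = (lam * (1 - β) / (4 * β * (1 - lam) * (1 - γ))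
            * (x (t + 1) (σ t) - x t (σ t)))
          * ∑ j ∈ Finset.univ.erase (σ t), A (σ t) j * (2 * x t j + α * (1 + x t j)) :=
          (Finset.mul_sum _ _ _).symm
      _ = _ := by rw [he]
  -- rewrite the second sum
  have hsum2 : (∑ j ∈ Finset.univ.erase (σ t),
        W (σ t) j * ((y (t + 1) (σ t) - y t j) ^ 2 - (y t (σ t) - y t j) ^ 2))
      = (((y (t + 1) (σ t)) ^ 2 - 2 * (y (t + 1) (σ t)) * (∑ j, W (σ t) j * y t j))
          - ((y t (σ t)) ^ 2 - 2 * (y t (σ t)) * (∑ j, W (σ t) j * y t j)))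
        - W (σ t) (σ t) * (y (t + 1) (σ t) - y t (σ t)) ^ 2 := by
    have hfull : ∑ j, W (σ t) j * ((y (t + 1) (σ t) - y t j) ^ 2 - (y t (σ t) - y t j) ^ 2)
        = ((y (t + 1) (σ t)) ^ 2 - (y t (σ t)) ^ 2) * (∑ j, W (σ t) j)
          - 2 * (y (t + 1) (σ t) - y t (σ t)) * (∑ j, W (σ t) j * y t j) := by
      rw [Finset.mul_sum, Finset.mul_sum, ← Finset.sum_sub_distrib]
      exact Finset.sum_congr rfl (fun j _ => by ring)
    rw [hWrow (σ t)] at hfull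
    have hdecomp : W (σ t) (σ t) *
          ((y (t + 1) (σ t) - y t (σ t)) ^ 2 - (y t (σ t) - y t (σ t)) ^ 2)
        + ∑ j ∈ Finset.univ.erase (σ t),
            W (σ t) j * ((y (t + 1) (σ t) - y t j) ^ 2 - (y t (σ t) - y t j) ^ 2)
        = ∑ j, W (σ t) j * ((y (t + 1) (σ t) - y t j) ^ 2 - (y t (σ t) - y t j) ^ 2) :=
      Finset.add_sum_erase _
        (fun j => W (σ t) j * ((y (t + 1) (σ t) - y t j) ^ 2 - (y t (σ t) - y t j) ^ 2))
        (Finset.mem_univ _)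
    have hdg : W (σ t) (σ t) *
        ((y (t + 1) (σ t) - y t (σ t)) ^ 2 - (y t (σ t) - y t (σ t)) ^ 2)
        = W (σ t) (σ t) * (y (t + 1) (σ t) - y t (σ t)) ^ 2 := by ring
    nlinarith [hfull, hdecomp, hdg]
  rw [hsum1, hsum2] at hΦ
  have hkey := key_ineq lam β γ α (x t (σ t)) (x (t + 1) (σ t)) (y t (σ t))
    (y (t + 1) (σ t)) (∑ j, A (σ t) j * (2 * x t j + α * (1 + x t j)))
    (∑ j, W (σ t) j * y t j) (u (σ t)) (A (σ t) (σ t)) (W (σ t) (σ t))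
    hl hl1 hb hb1 hg hg1 hα (hA _ _) (hW _ _) hc2 hc1 key2.1 hy1 hδ'
  have hinfpos : (0:ℝ) < Finset.univ.inf' ⟨⟨0, by omega⟩, Finset.mem_univ _⟩
      (fun k => (1 / (β * (1 - lam) * (1 - γ))) * lam * (1 - β) * A k k) := by
    refine (Finset.lt_inf'_iff ..).mpr ?_
    intro k _
    have hpos : (0:ℝ) < 1 / (β * (1 - lam) * (1 - γ)) :=
      div_pos one_pos (mul_pos (mul_pos hb h1l) h3l)
    exact mul_pos (mul_pos (mul_pos hpos hl) h2l) (hAdiag k)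
  constructor
  · rw [hΦ]
    refine lt_of_le_of_lt (Finset.inf'_le _ (Finset.mem_univ (σ t))) ?_
    have hb2 : (1 / (β * (1 - lam) * (1 - γ))) * lam * (1 - β) * A (σ t) (σ t)
        = 1 / (β * (1 - lam) * (1 - γ)) * lam * (1 - β) * A (σ t) (σ t) := rfl
    linarith [hkey]
  · exact hinfpos
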